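/- arXiv:2602.23884 — 2 statements merged into one kernel-verified Lean document; each statement's English description precedes it below -/
import Mathlib

section
/- Let G and H be finite simple graphs with G connected, and let X and Y be vertex covers of the empty bisector graph Ĝ. Then the set S = (⋃_{v_i ∈ X} V(H_i)) ∪ Y is a distance-equalizer set of the corona product G⊙H if and only if (X,Y) is a forward-equalized pair of G (in particular X ∪ Y = V(G)). -/
universe u v

variable {V : Type u} {W : Type v}

/-- A distance-equalizer set of a graph: for every pair of distinct vertices outside `S`
there is a vertex of `S` equidistant to both. -/
def IsDistEqSet {α : Type*} (G : SimpleGraph α) (S : Set α) : Prop :=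
  ∀ ⦃x y : α⦄, x ∉ S → y ∉ S → x ≠ y → ∃ w ∈ S, G.dist w x = G.dist w y

/-- The equidistant dimension of a graph: the minimum cardinality of a distance-equalizer set. -/
noncomputable def eqdim {α : Type*} (G : SimpleGraph α) : ℕ :=
  sInf {n | ∃ S : Set α, IsDistEqSet G S ∧ S.ncard = n}

/-- The bisector of two vertices: vertices equidistant to both. -/
def bisector {α : Type*} (G : SimpleGraph α) (x y : α) : Set α :=
  {w | G.dist w x = G.dist w y}

/-- The empty bisector graph of `G`: two distinct vertices are adjacent iff their bisector
in `G` is empty. -/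
def emptyBisector {α : Type*} (G : SimpleGraph α) : SimpleGraph α where
  Adj x y := x ≠ y ∧ bisector G x y = ∅
  symm := ⟨by
    rintro x y ⟨h1, h2⟩
    refine ⟨h1.symm, Set.eq_empty_iff_forall_notMem.mpr fun w hw => ?_⟩
    exact Set.eq_empty_iff_forall_notMem.mp h2 w
      ((show G.dist w y = G.dist w x from hw).symm)⟩
  loopless := ⟨fun _ h => h.1 rfl⟩

/-- A vertex cover of a graph: a set of vertices meeting every edge. -/
def IsVertexCover {α : Type*} (G : SimpleGraph α) (C : Set α) : Prop :=
  ∀ ⦃x y : α⦄, G.Adj x y → x ∈ C ∨ y ∈ C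

/-- An independent set of a graph: a set of pairwise non-adjacent vertices. -/
def IsIndepSet {α : Type*} (G : SimpleGraph α) (A : Set α) : Prop :=
  ∀ ⦃x y : α⦄, x ∈ A → y ∈ A → ¬ G.Adj x y

/-- The vertex cover number `β(G)`. -/
noncomputable def vcNum {α : Type*} (G : SimpleGraph α) : ℕ :=
  sInf {n | ∃ C : Set α, IsVertexCover G C ∧ C.ncard = n}

/-- The independence number `α(G)`. -/
noncomputable def indepNum {α : Type*} (G : SimpleGraph α) : ℕ :=
  sSup {n | ∃ A : Set α, IsIndepSet G A ∧ A.ncard = n}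

/-- A forward-equalized pair `(X, Y)` of `G`: `X ∪ Y = V(G)` and for every
`a ∈ X \ Y` and `b ∈ Y \ X` there is `w` with `d(w,a) = d(w,b) + 1`. -/
def IsForwardEqualizedPair {α : Type*} (G : SimpleGraph α) (X Y : Set α) : Prop :=
  X ∪ Y = Set.univ ∧
  ∀ ⦃a⦄, a ∈ X \ Y → ∀ ⦃b⦄, b ∈ Y \ X → ∃ w, G.dist w a = G.dist w b + 1

/-- `β*(G)`: the minimum of `|X ∩ Y|` over all pairs of vertex covers `X, Y` of the
empty bisector graph of `G` such that `(X, Y)` is a forward-equalized pair of `G`. -/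
noncomputable def betaStar {α : Type*} (G : SimpleGraph α) : ℕ :=
  sInf {n | ∃ X Y : Set α,
    IsVertexCover (emptyBisector G) X ∧ IsVertexCover (emptyBisector G) Y ∧
    IsForwardEqualizedPair G X Y ∧ (X ∩ Y).ncard = n}

/-- The corona product `G ⊙ H`: one copy of `H` for each vertex `i` of `G` (the vertices
`Sum.inr (i, w)`), with `i` joined to every vertex of its copy. -/
def corona (G : SimpleGraph V) (H : SimpleGraph W) : SimpleGraph (V ⊕ V × W) where
  Adj x y :=
    match x, y with
    | Sum.inl a, Sum.inl b => G.Adj a b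
    | Sum.inl a, Sum.inr p => a = p.1
    | Sum.inr p, Sum.inl a => a = p.1
    | Sum.inr p, Sum.inr q => p.1 = q.1 ∧ H.Adj p.2 q.2
  symm := ⟨by
    rintro (a | p) (b | q) h
    · exact h.symm
    · exact h
    · exact h
    · exact ⟨h.1.symm, h.2.symm⟩⟩
  loopless := ⟨by
    rintro (a | p) h
    · exact G.loopless.irrefl a h
    · exact H.loopless.irrefl p.2 h.2⟩
section CoronaAuxLemmas

private lemma corona_le_length {α : Type*} {K : SimpleGraph α} {g : α → ℕ}
    (hLip : ∀ ⦃x y⦄, K.Adj x y → g x ≤ g y + 1) :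
    ∀ {x y : α} (p : K.Walk x y), g x ≤ g y + p.length := by
  intro x y p
  induction p with
  | nil => simp
  | cons h q ih =>
      have h1 := hLip h
      simp only [SimpleGraph.Walk.length_cons]
      omega

private lemma corona_lower {α : Type*} {K : SimpleGraph α} {g : α → ℕ}
    (hLip : ∀ ⦃x y⦄, K.Adj x y → g x ≤ g y + 1) {x t : α}
    (h0 : g t = 0) (hr : K.Reachable x t) : g x ≤ K.dist x t := by
  obtain ⟨q, hq⟩ := hr.exists_walk_length_eq_dist
  have h1 := corona_le_length hLip q
  omega

private def coronaInl (G : SimpleGraph V) (H : SimpleGraph W) : G →g corona G H :=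
  ⟨Sum.inl, fun h => h⟩

@[simp] private lemma coronaInl_apply (G : SimpleGraph V) (H : SimpleGraph W) (a : V) :
    coronaInl G H a = Sum.inl a := rfl

private lemma corona_dist_inl_inl (G : SimpleGraph V) (H : SimpleGraph W)
    (hG : G.Connected) (a b : V) :
    (corona G H).dist (Sum.inl a) (Sum.inl b) = G.dist a b := by
  classical
  obtain ⟨p, hp⟩ := hG.exists_walk_length_eq_dist a b
  have hub : (corona G H).dist (Sum.inl a) (Sum.inl b) ≤ G.dist a b := by
    have h := SimpleGraph.dist_le (p.map (coronaInl G H))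
    rwa [SimpleGraph.Walk.length_map, hp, coronaInl_apply, coronaInl_apply] at h
  refine le_antisymm hub ?_
  set g : V ⊕ V × W → ℕ := fun x => match x with
    | Sum.inl c => G.dist c b
    | Sum.inr q => G.dist q.1 b + 1 with hgdef
  have hLip : ∀ ⦃x y⦄, (corona G H).Adj x y → g x ≤ g y + 1 := by
    rintro (c | q) (c' | q') h
    · have h1 := hG.dist_triangle (u := c) (v := c') (w := b)
      have hadj : G.Adj c c' := h
      have h2 : G.dist c c' ≤ 1 := by
        simpa using SimpleGraph.dist_le hadj.toWalk
      simpa [g] using by omega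
    · obtain rfl : c = q'.1 := h
      simp only [g]
      omega
    · obtain rfl : c' = q.1 := h
      simp only [g]
      omega
    · obtain h1 := h.1
      simp [g, h1]
  have hreach : (corona G H).Reachable (Sum.inl a) (Sum.inl b) := by
    have := (p.map (coronaInl G H)).reachable
    simpa using this
  have hlow := corona_lower hLip (t := Sum.inl b) (x := Sum.inl a)
    (by simp [g]) hreach
  simpa [g] using hlow

open Classical in
private noncomputable def coronaG (G : SimpleGraph V) (j : V) (w₀ : W) : V ⊕ V × W → ℕ :=
  fun x => match x with
    | Sum.inl a => G.dist a j + 1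
    | Sum.inr p => if p.1 = j then (if p.2 = w₀ then 0 else 1) else G.dist p.1 j + 2

private lemma coronaG_lip (G : SimpleGraph V) (H : SimpleGraph W) (hG : G.Connected)
    (j : V) (w₀ : W) :
    ∀ ⦃x y⦄, (corona G H).Adj x y → coronaG G j w₀ x ≤ coronaG G j w₀ y + 1 := by
  rintro (a | p) (c | q) h
  · have h1 := hG.dist_triangle (u := a) (v := c) (w := j)
    have hadj : G.Adj a c := h
    have h2 : G.dist a c ≤ 1 := by
      simpa using SimpleGraph.dist_le hadj.toWalk
    simp only [coronaG]
    omega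
  · obtain rfl : a = q.1 := h
    by_cases hq1 : q.1 = j
    · rw [hq1]
      simp only [coronaG, if_pos hq1, SimpleGraph.dist_self]
      split <;> omega
    · simp only [coronaG, if_neg hq1]
      omega
  · obtain rfl : c = p.1 := h
    by_cases hp1 : p.1 = j
    · rw [hp1]
      simp only [coronaG, if_pos hp1, SimpleGraph.dist_self]
      split <;> omega
    · simp only [coronaG, if_neg hp1]
      omega
  · obtain ⟨h1, -⟩ := h
    by_cases hp1 : p.1 = j
    · have hq1 : q.1 = j := by rw [← h1]; exact hp1
      simp only [coronaG, if_pos hp1, if_pos hq1]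
      split <;> split <;> omega
    · have hq1 : ¬ q.1 = j := by rw [← h1]; exact hp1
      simp only [coronaG, if_neg hp1, if_neg hq1, h1]
      omega

private lemma corona_dist_inl_inr (G : SimpleGraph V) (H : SimpleGraph W)
    (hG : G.Connected) (a j : V) (w₀ : W) :
    (corona G H).dist (Sum.inl a) (Sum.inr (j, w₀)) = G.dist a j + 1 := by
  classical
  obtain ⟨p, hp⟩ := hG.exists_walk_length_eq_dist a j
  have hadj : (corona G H).Adj (Sum.inl j) (Sum.inr (j, w₀)) := rfl
  let q0 : (corona G H).Walk (Sum.inl a) (Sum.inl j) := p.map (coronaInl G H)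
  let q : (corona G H).Walk (Sum.inl a) (Sum.inr (j, w₀)) := q0.concat hadj
  have hqlen : q.length = G.dist a j + 1 := by
    have : q0.length = p.length := SimpleGraph.Walk.length_map _ _
    simp only [q, SimpleGraph.Walk.length_concat, this, hp]
  have hub : (corona G H).dist (Sum.inl a) (Sum.inr (j, w₀)) ≤ G.dist a j + 1 := by
    have h := SimpleGraph.dist_le q
    omega
  refine le_antisymm hub ?_
  have hlow := corona_lower (coronaG_lip G H hG j w₀) (x := Sum.inl a)
    (t := Sum.inr (j, w₀)) (by simp [coronaG]) q.reachable
  simpa [coronaG] using hlow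

private lemma corona_dist_inr_inr (G : SimpleGraph V) (H : SimpleGraph W)
    (hG : G.Connected) {i j : V} (hij : i ≠ j) (w w' : W) :
    (corona G H).dist (Sum.inr (i, w)) (Sum.inr (j, w')) = G.dist i j + 2 := by
  classical
  obtain ⟨p, hp⟩ := hG.exists_walk_length_eq_dist i j
  have hadj1 : (corona G H).Adj (Sum.inr (i, w)) (Sum.inl i) := rfl
  have hadj2 : (corona G H).Adj (Sum.inl j) (Sum.inr (j, w')) := rfl
  let q0 : (corona G H).Walk (Sum.inl i) (Sum.inl j) := p.map (coronaInl G H)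
  let q : (corona G H).Walk (Sum.inr (i, w)) (Sum.inr (j, w')) :=
    SimpleGraph.Walk.cons hadj1 (q0.concat hadj2)
  have hqlen : q.length = G.dist i j + 2 := by
    have : q0.length = p.length := SimpleGraph.Walk.length_map _ _
    simp only [q, SimpleGraph.Walk.length_cons, SimpleGraph.Walk.length_concat, this, hp]
  have hub : (corona G H).dist (Sum.inr (i, w)) (Sum.inr (j, w')) ≤ G.dist i j + 2 := by
    have h := SimpleGraph.dist_le q
    omega
  refine le_antisymm hub ?_
  have hlow := corona_lower (coronaG_lip G H hG j w') (x := Sum.inr (i, w))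
    (t := Sum.inr (j, w')) (by simp [coronaG]) q.reachable
  simpa [coronaG, hij] using hlow

private lemma corona_dist_inr_inl (G : SimpleGraph V) (H : SimpleGraph W)
    (hG : G.Connected) (i a : V) (w : W) :
    (corona G H).dist (Sum.inr (i, w)) (Sum.inl a) = G.dist i a + 1 := by
  rw [SimpleGraph.dist_comm, corona_dist_inl_inr G H hG, SimpleGraph.dist_comm]

end CoronaAuxLemmas

/-- For vertex covers `X, Y` of the empty bisector graph `Ĝ`, the set
`S = (⋃_{v ∈ X} V(H_v)) ∪ Y` is a distance-equalizer set of `G ⊙ H` iff `(X, Y)` is a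
forward-equalized pair of `G` (in particular `X ∪ Y = V(G)`). -/
theorem corona_distEqSet_iff_forwardEqualizedPair [Fintype V] [Fintype W] [Nonempty W]
    (G : SimpleGraph V) (H : SimpleGraph W) (hG : G.Connected)
    (X Y : Set V) (hX : IsVertexCover (emptyBisector G) X)
    (hY : IsVertexCover (emptyBisector G) Y) :
    IsDistEqSet (corona G H)
      ({x : V ⊕ V × W | ∃ v ∈ X, ∃ w : W, x = Sum.inr (v, w)} ∪ Sum.inl '' Y) ↔
    IsForwardEqualizedPair G X Y := by
  classical
  obtain ⟨w₀⟩ := ‹Nonempty W›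
  set S : Set (V ⊕ V × W) :=
    {x : V ⊕ V × W | ∃ v ∈ X, ∃ w : W, x = Sum.inr (v, w)} ∪ Sum.inl '' Y with hSdef
  have hmemL : ∀ c : V, (Sum.inl c : V ⊕ V × W) ∈ S ↔ c ∈ Y := by
    intro c; simp [S]
  have hmemR : ∀ (v : V) (w : W), (Sum.inr (v, w) : V ⊕ V × W) ∈ S ↔ v ∈ X := by
    intro v w; simp [S]
  have dAA := corona_dist_inl_inl G H hG
  have dAB := corona_dist_inl_inr G H hG
  have dBA := corona_dist_inr_inl G H hG
  constructor
  · intro hDE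
    have huniv : X ∪ Y = Set.univ := by
      by_contra hne
      obtain ⟨a, ha⟩ := (Set.ne_univ_iff_exists_notMem _).mp hne
      have haX : a ∉ X := fun h => ha (Or.inl h)
      have haY : a ∉ Y := fun h => ha (Or.inr h)
      obtain ⟨s, hsS, hsd⟩ := hDE (x := Sum.inl a) (y := Sum.inr (a, w₀))
        (fun h => haY ((hmemL a).mp h)) (fun h => haX ((hmemR a w₀).mp h)) (by simp)
      obtain c | ⟨v, u⟩ := s
      · rw [dAA, dAB] at hsd
        omega
      · have hvX : v ∈ X := (hmemR v u).mp hsS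
        have hva : v ≠ a := fun h => haX (h ▸ hvX)
        rw [dBA, corona_dist_inr_inr G H hG hva] at hsd
        omega
    refine ⟨huniv, ?_⟩
    rintro a ⟨haX, haY⟩ b ⟨hbY, hbX⟩
    obtain ⟨s, hsS, hsd⟩ := hDE (x := Sum.inl a) (y := Sum.inr (b, w₀))
      (fun h => haY ((hmemL a).mp h)) (fun h => hbX ((hmemR b w₀).mp h)) (by simp)
    obtain c | ⟨v, u⟩ := s
    · rw [dAA, dAB] at hsd
      exact ⟨c, hsd⟩
    · have hvX : v ∈ X := (hmemR v u).mp hsS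
      have hvb : v ≠ b := fun h => hbX (h ▸ hvX)
      rw [dBA, corona_dist_inr_inr G H hG hvb] at hsd
      exact ⟨v, by omega⟩
  · rintro ⟨huniv, hfwd⟩
    have hXY : ∀ c : V, c ∉ X → c ∈ Y := fun c hc =>
      ((huniv ▸ Set.mem_univ c : c ∈ X ∪ Y)).resolve_left hc
    have hYX : ∀ c : V, c ∉ Y → c ∈ X := fun c hc =>
      ((huniv ▸ Set.mem_univ c : c ∈ X ∪ Y)).resolve_right hc
    have key : ∀ (a i : V) (w : W), a ∉ Y → i ∉ X →
        ∃ s ∈ S, (corona G H).dist s (Sum.inl a) = (corona G H).dist s (Sum.inr (i, w)) := by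
      intro a i w haY hiX
      obtain ⟨z, hz⟩ := hfwd ⟨hYX a haY, haY⟩ ⟨hXY i hiX, hiX⟩
      by_cases hzY : z ∈ Y
      · exact ⟨Sum.inl z, (hmemL z).mpr hzY, by rw [dAA, dAB]; exact hz⟩
      · have hzX : z ∈ X := hYX z hzY
        have hzi : z ≠ i := fun h => hiX (h ▸ hzX)
        refine ⟨Sum.inr (z, w₀), (hmemR z w₀).mpr hzX, ?_⟩
        rw [dBA, corona_dist_inr_inr G H hG hzi]
        omega
    intro x y hx hy hxy
    obtain a | ⟨i, w⟩ := x <;> obtain b | ⟨j, w'⟩ := y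
    · have haY : a ∉ Y := fun h => hx ((hmemL a).mpr h)
      have hbY : b ∉ Y := fun h => hy ((hmemL b).mpr h)
      have hab : a ≠ b := fun h => hxy (by rw [h])
      have hnadj : ¬ (emptyBisector G).Adj a b := fun h => (hY h).elim haY hbY
      have hbis : ∃ z, G.dist z a = G.dist z b := by
        by_contra hc
        push_neg at hc
        exact hnadj ⟨hab, Set.eq_empty_iff_forall_notMem.mpr hc⟩
      obtain ⟨z, hz⟩ := hbis
      by_cases hzY : z ∈ Y
      · exact ⟨Sum.inl z, (hmemL z).mpr hzY, by rw [dAA, dAA]; exact hz⟩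
      · exact ⟨Sum.inr (z, w₀), (hmemR z w₀).mpr (hYX z hzY), by rw [dBA, dBA]; omega⟩
    · exact key a j w' (fun h => hx ((hmemL a).mpr h)) (fun h => hy ((hmemR j w').mpr h))
    · obtain ⟨s, hs, hd⟩ := key b i w (fun h => hy ((hmemL b).mpr h))
        (fun h => hx ((hmemR i w).mpr h))
      exact ⟨s, hs, hd.symm⟩
    · have hiX : i ∉ X := fun h => hx ((hmemR i w).mpr h)
      have hjX : j ∉ X := fun h => hy ((hmemR j w').mpr h)
      by_cases hij : i = j
      · subst hij
        exact ⟨Sum.inl i, (hmemL i).mpr (hXY i hiX), by rw [dAB, dAB]⟩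
      · have hnadj : ¬ (emptyBisector G).Adj i j := fun h => (hX h).elim hiX hjX
        have hbis : ∃ z, G.dist z i = G.dist z j := by
          by_contra hc
          push_neg at hc
          exact hnadj ⟨hij, Set.eq_empty_iff_forall_notMem.mpr hc⟩
        obtain ⟨z, hz⟩ := hbis
        by_cases hzY : z ∈ Y
        · exact ⟨Sum.inl z, (hmemL z).mpr hzY, by rw [dAB, dAB]; omega⟩
        · have hzX : z ∈ X := hYX z hzY
          have hzi : z ≠ i := fun h => hiX (h ▸ hzX)
          have hzj : z ≠ j := fun h => hjX (h ▸ hzX)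
          refine ⟨Sum.inr (z, w₀), (hmemR z w₀).mpr hzX, ?_⟩
          rw [corona_dist_inr_inr G H hG hzi, corona_dist_inr_inr G H hG hzj]
          omega
end

section
/- For any two finite simple graphs G and H with G connected, ξ(G⊙H) ≥ β(Ĝ)·n(H) + α(Ĝ) + β*(G). -/
universe u v

variable {V : Type u} {W : Type v}

section CoronaAux

open SimpleGraph

variable {V : Type u} {W : Type v}

/-- Projection of a corona vertex to its base vertex in `G`. -/
def cproj : V ⊕ V × W → V := Sum.elim id Prod.fst

open Classical in
noncomputable def cwt : V ⊕ V × W → V ⊕ V × W → ℕ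
  | Sum.inl _, Sum.inl _ => 0
  | Sum.inl _, Sum.inr _ => 1
  | Sum.inr _, Sum.inl _ => 1
  | Sum.inr p, Sum.inr q => if p.1 = q.1 then 0 else 2

lemma cwt_self (a : V ⊕ V × W) : cwt a a = 0 := by
  rcases a with i | p <;> simp [cwt]

lemma corona_walk_lb {G : SimpleGraph V} {H : SimpleGraph W} (hG : G.Connected)
    {a b : V ⊕ V × W} (p : (corona G H).Walk a b) :
    G.dist (cproj a) (cproj b) + cwt a b ≤ p.length := by
  induction p with
  | nil => simp [cwt_self]
  | cons h q ih =>
    rename_i u c vb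
    rw [SimpleGraph.Walk.length_cons]
    have key : G.dist (cproj u) (cproj vb) + cwt u vb ≤
        G.dist (cproj c) (cproj vb) + cwt c vb + 1 := by
      rcases u with i | pp <;> rcases c with j | qq
      · -- inl i, inl j
        have hadj : G.Adj i j := h
        have h1 : G.dist i j ≤ 1 :=
          SimpleGraph.dist_le (SimpleGraph.Walk.cons hadj SimpleGraph.Walk.nil)
        have h2 : G.dist i (cproj vb) ≤ G.dist i j + G.dist j (cproj vb) :=
          hG.dist_triangle
        have h3 : cwt (Sum.inl i : V ⊕ V × W) vb = cwt (Sum.inl j : V ⊕ V × W) vb := by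
          rcases vb with k | r <;> simp [cwt]
        simp only [cproj, Sum.elim_inl, id_eq] at *
        omega
      · -- inl i, inr qq
        have hi : i = qq.1 := h
        subst hi
        have h3 : cwt (Sum.inl qq.1 : V ⊕ V × W) vb ≤ cwt (Sum.inr qq : V ⊕ V × W) vb + 1 := by
          rcases vb with k | r
          · simp [cwt]
          · simp only [cwt]; split_ifs <;> omega
        simp only [cproj, Sum.elim_inl, Sum.elim_inr, id_eq]
        omega
      · -- inr pp, inl j
        have hj : j = pp.1 := h
        subst hj
        have h3 : cwt (Sum.inr pp : V ⊕ V × W) vb ≤ cwt (Sum.inl pp.1 : V ⊕ V × W) vb + 1 := by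
          rcases vb with k | r
          · simp [cwt]
          · simp only [cwt]; split_ifs <;> omega
        simp only [cproj, Sum.elim_inl, Sum.elim_inr, id_eq]
        omega
      · -- inr pp, inr qq
        have h1 : pp.1 = qq.1 := h.1
        have h3 : cwt (Sum.inr pp : V ⊕ V × W) vb = cwt (Sum.inr qq : V ⊕ V × W) vb := by
          rcases vb with k | r
          · simp [cwt]
          · simp only [cwt]; rw [h1]
        simp only [cproj, Sum.elim_inr, id_eq, h1, h3]
        omega
    omega

/-- The embedding of `G` into the corona. -/
def inlHom (G : SimpleGraph V) (H : SimpleGraph W) : G →g corona G H :=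
  { toFun := Sum.inl, map_rel' := fun h => h }

lemma corona_dist_ll {G : SimpleGraph V} {H : SimpleGraph W} (hG : G.Connected)
    (i j : V) : (corona G H).dist (Sum.inl i) (Sum.inl j) = G.dist i j := by
  obtain ⟨p, hp⟩ := hG.exists_walk_length_eq_dist i j
  have hub : (corona G H).dist (Sum.inl i) (Sum.inl j) ≤ G.dist i j := by
    have := SimpleGraph.dist_le (p.map (inlHom G H))
    rwa [SimpleGraph.Walk.length_map, hp] at this
  have hreach : (corona G H).Reachable (Sum.inl i) (Sum.inl j) := ⟨p.map (inlHom G H)⟩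
  obtain ⟨q, hq⟩ := hreach.exists_walk_length_eq_dist
  have hlb := corona_walk_lb hG q
  simp only [cproj, cwt, Sum.elim_inl, id_eq, add_zero] at hlb
  omega

lemma corona_dist_lr {G : SimpleGraph V} {H : SimpleGraph W} (hG : G.Connected)
    (k i : V) (w : W) :
    (corona G H).dist (Sum.inl k) (Sum.inr (i, w)) = G.dist k i + 1 := by
  obtain ⟨p, hp⟩ := hG.exists_walk_length_eq_dist k i
  have hadj : (corona G H).Adj (Sum.inl i) (Sum.inr (i, w)) := rfl
  have hub : (corona G H).dist (Sum.inl k) (Sum.inr (i, w)) ≤ G.dist k i + 1 := by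
    have := SimpleGraph.dist_le ((p.map (inlHom G H)).concat hadj)
    erw [SimpleGraph.Walk.length_concat, SimpleGraph.Walk.length_map, hp] at this; exact this
  have hreach : (corona G H).Reachable (Sum.inl k) (Sum.inr (i, w)) :=
    ⟨(p.map (inlHom G H)).concat hadj⟩
  obtain ⟨r, hr⟩ := hreach.exists_walk_length_eq_dist
  have hlb := corona_walk_lb hG r
  simp only [cproj, cwt, Sum.elim_inl, Sum.elim_inr, id_eq] at hlb
  omega

lemma corona_dist_rl {G : SimpleGraph V} {H : SimpleGraph W} (hG : G.Connected)
    (k i : V) (x : W) :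
    (corona G H).dist (Sum.inr (k, x)) (Sum.inl i) = G.dist k i + 1 := by
  rw [SimpleGraph.dist_comm, corona_dist_lr hG, SimpleGraph.dist_comm]

lemma corona_dist_rr {G : SimpleGraph V} {H : SimpleGraph W} (hG : G.Connected)
    {k i : V} (hki : k ≠ i) (x w : W) :
    (corona G H).dist (Sum.inr (k, x)) (Sum.inr (i, w)) = G.dist k i + 2 := by
  obtain ⟨p, hp⟩ := hG.exists_walk_length_eq_dist k i
  have hadj1 : (corona G H).Adj (Sum.inr (k, x)) (Sum.inl k) := rfl
  have hadj2 : (corona G H).Adj (Sum.inl i) (Sum.inr (i, w)) := rfl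
  have hub : (corona G H).dist (Sum.inr (k, x)) (Sum.inr (i, w)) ≤ G.dist k i + 2 := by
    have := SimpleGraph.dist_le
      (SimpleGraph.Walk.cons hadj1 ((p.map (inlHom G H)).concat hadj2))
    erw [SimpleGraph.Walk.length_cons, SimpleGraph.Walk.length_concat,
      SimpleGraph.Walk.length_map, hp] at this; exact this
  have hreach : (corona G H).Reachable (Sum.inr (k, x)) (Sum.inr (i, w)) :=
    ⟨SimpleGraph.Walk.cons hadj1 ((p.map (inlHom G H)).concat hadj2)⟩
  obtain ⟨r, hr⟩ := hreach.exists_walk_length_eq_dist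
  have hlb := corona_walk_lb hG r
  simp only [cproj, cwt, Sum.elim_inr, id_eq, if_neg hki] at hlb
  omega

lemma corona_dist_same_le {G : SimpleGraph V} {H : SimpleGraph W}
    (i : V) (x w : W) :
    (corona G H).dist (Sum.inr (i, x)) (Sum.inr (i, w)) ≤ 2 := by
  have hadj1 : (corona G H).Adj (Sum.inr (i, x)) (Sum.inl i) := rfl
  have hadj2 : (corona G H).Adj (Sum.inl i) (Sum.inr (i, w)) := rfl
  have := SimpleGraph.dist_le
    (SimpleGraph.Walk.cons hadj1 (SimpleGraph.Walk.cons hadj2 SimpleGraph.Walk.nil))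
  simpa using this

end CoronaAux

/-- `ξ(G ⊙ H) ≥ β(Ĝ)·n(H) + α(Ĝ) + β*(G)`. -/
theorem eqdim_corona_lower_bound [Fintype V] [Fintype W] [Nonempty W]
    (G : SimpleGraph V) (H : SimpleGraph W) (hG : G.Connected) :
    vcNum (emptyBisector G) * Fintype.card W + indepNum (emptyBisector G) + betaStar G ≤
      eqdim (corona G H) := by
  classical
  -- Gallai-type bound: α(Ĝ) + β(Ĝ) ≤ |V|
  have hαβ : indepNum (emptyBisector G) + vcNum (emptyBisector G) ≤ Fintype.card V := by
    have hne : ({n | ∃ A : Set V, IsIndepSet (emptyBisector G) A ∧ A.ncard = n}).Nonempty :=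
      ⟨0, ∅, fun x y hx _ _ => (Set.notMem_empty x hx), Set.ncard_empty _⟩
    have hbdd : ∀ n ∈ {n | ∃ A : Set V, IsIndepSet (emptyBisector G) A ∧ A.ncard = n},
        n ≤ Fintype.card V := by
      rintro n ⟨A, -, rfl⟩
      have h := Set.ncard_le_ncard (Set.subset_univ A) Set.finite_univ
      rwa [Set.ncard_univ, Nat.card_eq_fintype_card] at h
    obtain ⟨A, hA, hcard⟩ := Nat.sSup_mem hne ⟨Fintype.card V, fun n hn => hbdd n hn⟩
    have hcov : IsVertexCover (emptyBisector G) Aᶜ := by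
      intro x y hxy
      by_contra hc
      push_neg at hc
      rw [Set.notMem_compl_iff, Set.notMem_compl_iff] at hc
      exact hA hc.1 hc.2 hxy
    have hvc : vcNum (emptyBisector G) ≤ Aᶜ.ncard := Nat.sInf_le ⟨Aᶜ, hcov, rfl⟩
    have hcompl := Set.ncard_add_ncard_compl A
    rw [Nat.card_eq_fintype_card] at hcompl
    rw [indepNum, ← hcard]
    omega
  have hbis : ∀ {i j : V}, (emptyBisector G).Adj i j →
      i ≠ j ∧ ∀ k, G.dist k i ≠ G.dist k j :=
    fun h => ⟨h.1, fun k hk => Set.eq_empty_iff_forall_notMem.mp h.2 k hk⟩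
  -- main argument: every distance-equalizer set of the corona is big
  refine le_csInf ⟨Fintype.card (V ⊕ V × W), Set.univ,
    fun x y hx _ _ => absurd (Set.mem_univ x) hx,
    by simp [Set.ncard_univ, Nat.card_eq_fintype_card]⟩ ?_
  rintro m ⟨S, hS, rfl⟩
  set Xs : Set V := {i | Sum.inl i ∈ S} with hXsdef
  set S2 : Set (V × W) := {p | Sum.inr p ∈ S} with hS2def
  set K : Set V := {i | ∃ w, (i, w) ∈ S2} with hKdef
  set F : Set V := {i | ∀ w, (i, w) ∈ S2} with hFdef
  have hFK : F ⊆ K := fun i hi => ⟨Classical.arbitrary W, hi _⟩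
  -- F is a vertex cover of the empty bisector graph
  have coverF : IsVertexCover (emptyBisector G) F := by
    intro i j hadj
    obtain ⟨hij, hb⟩ := hbis hadj
    by_contra hc
    push_neg at hc
    obtain ⟨w, hw⟩ := not_forall.mp hc.1
    obtain ⟨w', hw'⟩ := not_forall.mp hc.2
    obtain ⟨s, hsS, hd⟩ := hS (show Sum.inr (i, w) ∉ S from hw)
      (show Sum.inr (j, w') ∉ S from hw') (by simp [hij])
    rcases s with k | ⟨k, x⟩
    · rw [corona_dist_lr hG, corona_dist_lr hG] at hd
      exact hb k (by omega)
    · by_cases hki : k = i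
      · subst hki
        rw [corona_dist_rr hG hij] at hd
        have h2 := corona_dist_same_le (G := G) (H := H) k x w
        have h3 := hG.pos_dist_of_ne hij
        omega
      · by_cases hkj : k = j
        · subst hkj
          rw [corona_dist_rr hG (Ne.symm hij)] at hd
          have h2 := corona_dist_same_le (G := G) (H := H) k x w'
          have h3 := hG.pos_dist_of_ne (Ne.symm hij)
          omega
        · rw [corona_dist_rr hG hki, corona_dist_rr hG hkj] at hd
          exact hb k (by omega)
  have coverK : IsVertexCover (emptyBisector G) K := fun i j h =>
    (coverF h).imp (fun hi => hFK hi) (fun hj => hFK hj)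
  -- Xs is a vertex cover of the empty bisector graph
  have coverXs : IsVertexCover (emptyBisector G) Xs := by
    intro i j hadj
    obtain ⟨hij, hb⟩ := hbis hadj
    by_contra hc
    push_neg at hc
    obtain ⟨s, hsS, hd⟩ := hS (show Sum.inl i ∉ S from hc.1)
      (show Sum.inl j ∉ S from hc.2) (by simp [hij])
    rcases s with k | ⟨k, x⟩
    · rw [corona_dist_ll hG, corona_dist_ll hG] at hd
      exact hb k hd
    · rw [corona_dist_rl hG, corona_dist_rl hG] at hd
      exact hb k (by omega)
  -- every vertex has its copy met by S, or lies in S itself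
  have hunion : K ∪ Xs = Set.univ := by
    ext i
    simp only [Set.mem_union, Set.mem_univ, iff_true]
    by_contra hc
    push_neg at hc
    obtain ⟨hiK, hiXs⟩ := hc
    obtain ⟨s, hsS, hd⟩ := hS (show Sum.inl i ∉ S from hiXs)
      (show Sum.inr (i, Classical.arbitrary W) ∉ S from fun h => hiK ⟨_, h⟩) (by simp)
    rcases s with k | ⟨k, x⟩
    · rw [corona_dist_ll hG, corona_dist_lr hG] at hd
      omega
    · by_cases hki : k = i
      · exact hiK ⟨x, by rw [← hki]; exact hsS⟩
      · rw [corona_dist_rl hG, corona_dist_rr hG hki] at hd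
        omega
  -- (K, Xs) is a forward-equalized pair
  have hfwd : IsForwardEqualizedPair G K Xs := by
    refine ⟨hunion, ?_⟩
    intro a ha b hb
    have hab : a ≠ b := fun h => ha.2 (h ▸ hb.1)
    have hbK : b ∉ K := hb.2
    obtain ⟨s, hsS, hd⟩ := hS (show Sum.inl a ∉ S from ha.2)
      (show Sum.inr (b, Classical.arbitrary W) ∉ S from fun h => hbK ⟨_, h⟩) (by simp)
    rcases s with k | ⟨k, x⟩
    · rw [corona_dist_ll hG, corona_dist_lr hG] at hd
      exact ⟨k, hd⟩
    · by_cases hkb : k = b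
      · exact absurd ⟨x, by rw [← hkb]; exact hsS⟩ hbK
      · by_cases hka : k = a
        · subst hka
          rw [corona_dist_rl hG, corona_dist_rr hG hab, SimpleGraph.dist_self] at hd
          have := hG.pos_dist_of_ne hab
          omega
        · rw [corona_dist_rl hG, corona_dist_rr hG hkb] at hd
          exact ⟨k, by omega⟩
  -- numeric bounds
  have hβ : vcNum (emptyBisector G) ≤ F.ncard := Nat.sInf_le ⟨F, coverF, rfl⟩
  have hβ' : betaStar G ≤ (K ∩ Xs).ncard :=
    Nat.sInf_le ⟨K, Xs, coverK, coverXs, hfwd, rfl⟩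
  -- counting |S|
  have hSeq : S = Sum.inl '' Xs ∪ Sum.inr '' S2 := by
    ext x
    rcases x with i | p <;>
      simp [hXsdef, hS2def, Set.mem_image, Set.mem_union]
  have hdisj1 : Disjoint (Sum.inl '' Xs : Set (V ⊕ V × W)) (Sum.inr '' S2) := by
    rw [Set.disjoint_left]
    rintro _ ⟨i, -, rfl⟩ ⟨p, -, h⟩
    exact Sum.inl_ne_inr h.symm
  have hcard1 : S.ncard = Xs.ncard + S2.ncard := by
    rw [hSeq, Set.ncard_union_eq hdisj1 (Set.toFinite _) (Set.toFinite _),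
      Set.ncard_image_of_injective _ Sum.inl_injective,
      Set.ncard_image_of_injective _ Sum.inr_injective]
  -- lower bound for |S2|
  set g : V → V × W := fun i => (i, if h : i ∈ K then h.choose else Classical.arbitrary W)
    with hgdef
  have hginj : Function.Injective g := fun a b h => congrArg Prod.fst h
  have hsub : (F ×ˢ (Set.univ : Set W)) ∪ g '' (K \ F) ⊆ S2 := by
    rintro p hp
    rcases hp with hp | ⟨i, hi, rfl⟩
    · obtain ⟨i, w⟩ := p
      exact hp.1 w
    · simp only [hgdef, dif_pos hi.1]
      exact hi.1.choose_spec
  have hdisj2 : Disjoint (F ×ˢ (Set.univ : Set W)) (g '' (K \ F)) := by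
    rw [Set.disjoint_left]
    rintro p hp ⟨i, hi, rfl⟩
    exact hi.2 hp.1
  have hprod : (F ×ˢ (Set.univ : Set W)).ncard = F.ncard * Fintype.card W := by
    rw [← Nat.card_coe_set_eq, Nat.card_congr (Equiv.Set.prod F Set.univ),
      Nat.card_prod, Nat.card_coe_set_eq, Nat.card_coe_set_eq, Set.ncard_univ,
      Nat.card_eq_fintype_card]
  have hS2lb : F.ncard * Fintype.card W + (K \ F).ncard ≤ S2.ncard := by
    have h := Set.ncard_le_ncard hsub (Set.toFinite _)
    rwa [Set.ncard_union_eq hdisj2 (Set.toFinite _) (Set.toFinite _), hprod,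
      Set.ncard_image_of_injective _ hginj] at h
  have hKF : (K \ F).ncard + F.ncard = K.ncard :=
    Set.ncard_diff_add_ncard_of_subset hFK (Set.toFinite _)
  have hKXs : Fintype.card V + (K ∩ Xs).ncard = K.ncard + Xs.ncard := by
    have h := Set.ncard_union_add_ncard_inter K Xs (Set.toFinite _) (Set.toFinite _)
    rwa [hunion, Set.ncard_univ, Nat.card_eq_fintype_card] at h
  obtain ⟨k, hk⟩ : ∃ k, Fintype.card W = k + 1 :=
    ⟨Fintype.card W - 1, by have := Fintype.card_pos (α := W); omega⟩
  calc vcNum (emptyBisector G) * Fintype.card W + indepNum (emptyBisector G) + betaStar G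
      = vcNum (emptyBisector G) * k
        + (indepNum (emptyBisector G) + vcNum (emptyBisector G)) + betaStar G := by
        rw [hk]; ring
    _ ≤ F.ncard * k + Fintype.card V + (K ∩ Xs).ncard :=
        Nat.add_le_add (Nat.add_le_add (Nat.mul_le_mul_right k hβ) hαβ) hβ'
    _ = F.ncard * k + (K.ncard + Xs.ncard) := by rw [add_assoc, hKXs]
    _ = F.ncard * k + (((K \ F).ncard + F.ncard) + Xs.ncard) := by rw [hKF]
    _ = (F.ncard * (k + 1) + (K \ F).ncard) + Xs.ncard := by ring
    _ ≤ S2.ncard + Xs.ncard := Nat.add_le_add_right (hk ▸ hS2lb) _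
    _ = S.ncard := by rw [hcard1, Nat.add_comm]
end
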